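/- Given f : ℝ → ℝ with f(r) ≠ 0 for every rational r ∈ [0,1]: (i) there exists x ∈ [0,1] with f(x) = 0 if and only if the supremum of g_f over [0,1] equals 1 (and otherwise this supremum equals 0); and (ii) g_f has the intermediate value property on [0,1] — meaning for all a, b ∈ [0,1] with a < b and every y strictly between g_f(a) and g_f(b) there exists c ∈ (a, b) with g_f(c) = y — if and only if f has no zero in [0,1]. -/
import Mathlib


open Classical in
/-- The function `g_f`. -/
noncomputable def gf (f : ℝ → ℝ) (x : ℝ) : ℝ :=
  if ∃ q : ℚ, x + (q : ℝ) ∈ Set.Icc (0:ℝ) 1 ∧ f (x + (q : ℝ)) = 0 then 1 else 0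

lemma gf_mem (f : ℝ → ℝ) (x : ℝ) : gf f x = 0 ∨ gf f x = 1 := by
  unfold gf; split <;> simp

lemma gf_eq_zero_of_no_zero (f : ℝ → ℝ)
    (h : ¬ (∃ x ∈ Set.Icc (0:ℝ) 1, f x = 0)) (x : ℝ) : gf f x = 0 := by
  unfold gf
  rw [if_neg]
  rintro ⟨q, hq1, hq2⟩
  exact h ⟨x + q, hq1, hq2⟩

lemma gf_rat (f : ℝ → ℝ)
    (hf : ∀ r : ℚ, (r : ℝ) ∈ Set.Icc (0:ℝ) 1 → f r ≠ 0) (r : ℚ) :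
    gf f r = 0 := by
  unfold gf
  rw [if_neg]
  rintro ⟨q, hq1, hq2⟩
  have : ((r + q : ℚ) : ℝ) = (r : ℝ) + (q : ℝ) := by push_cast; ring
  exact hf (r + q) (by rw [this]; exact hq1) (by rw [this]; exact hq2)

theorem gf_sup_and_ivp (f : ℝ → ℝ)
    (hf : ∀ r : ℚ, (r : ℝ) ∈ Set.Icc (0:ℝ) 1 → f r ≠ 0) :
    ((∃ x ∈ Set.Icc (0:ℝ) 1, f x = 0) ↔
        sSup (gf f '' Set.Icc (0:ℝ) 1) = 1) ∧
    (¬ (∃ x ∈ Set.Icc (0:ℝ) 1, f x = 0) →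
        sSup (gf f '' Set.Icc (0:ℝ) 1) = 0) ∧
    ((∀ a ∈ Set.Icc (0:ℝ) 1, ∀ b ∈ Set.Icc (0:ℝ) 1, a < b →
        ∀ y : ℝ, (gf f a < y ∧ y < gf f b) ∨ (gf f b < y ∧ y < gf f a) →
          ∃ c ∈ Set.Ioo a b, gf f c = y) ↔
      ¬ (∃ x ∈ Set.Icc (0:ℝ) 1, f x = 0)) := by
  -- value 1 at a zero
  have hone : ∀ x₀ ∈ Set.Icc (0:ℝ) 1, f x₀ = 0 → gf f x₀ = 1 := by
    intro x₀ hx₀ hfx₀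
    unfold gf
    rw [if_pos]
    exact ⟨0, by simpa using hx₀, by simpa using hfx₀⟩
  have hsup0 : ¬ (∃ x ∈ Set.Icc (0:ℝ) 1, f x = 0) →
      sSup (gf f '' Set.Icc (0:ℝ) 1) = 0 := by
    intro h
    have : gf f '' Set.Icc (0:ℝ) 1 = {0} := by
      apply Set.eq_singleton_iff_nonempty_unique_mem.2
      constructor
      · exact ⟨gf f 0, 0, by norm_num, rfl⟩
      · rintro y ⟨x, -, rfl⟩; exact gf_eq_zero_of_no_zero f h x
    rw [this, csSup_singleton]
  refine ⟨⟨?_, ?_⟩, hsup0, ?_, ?_⟩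
  · rintro ⟨x₀, hx₀, hfx₀⟩
    have h1 : (1:ℝ) ∈ gf f '' Set.Icc (0:ℝ) 1 := ⟨x₀, hx₀, hone x₀ hx₀ hfx₀⟩
    apply IsGreatest.csSup_eq
    refine ⟨h1, ?_⟩
    rintro y ⟨x, -, rfl⟩
    rcases gf_mem f x with h | h <;> rw [h] <;> norm_num
  · intro hsup
    by_contra h
    rw [hsup0 h] at hsup
    norm_num at hsup
  · intro hivp
    rintro ⟨x₀, hx₀, hfx₀⟩
    -- x₀ is irrational, so x₀ > 0
    have hirr : ∀ r : ℚ, x₀ ≠ (r : ℝ) := by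
      intro r hr
      exact hf r (hr ▸ hx₀) (hr ▸ hfx₀)
    have hx₀pos : 0 < x₀ := lt_of_le_of_ne hx₀.1 (fun h => hirr 0 (by simp [← h]))
    have h0 : gf f 0 = 0 := by
      have := gf_rat f hf 0
      simpa using this
    obtain ⟨c, -, hc⟩ := hivp 0 (by norm_num) x₀ hx₀ hx₀pos (1/2)
      (Or.inl ⟨by rw [h0]; norm_num, by rw [hone x₀ hx₀ hfx₀]; norm_num⟩)
    rcases gf_mem f c with h | h <;> rw [h] at hc <;> norm_num at hc
  · intro h a _ b _ _ y hy
    rw [gf_eq_zero_of_no_zero f h a, gf_eq_zero_of_no_zero f h b] at hy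
    rcases hy with ⟨h1, h2⟩ | ⟨h1, h2⟩ <;> linarith
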